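/- Let N be a positive integer and w = α₀α₁…α_{l−1} ∈ Ā a word of length l ≥ 1. Then there exists a unique α ∈ ℤ/Nℤ such that the word α₁…α_{l−1}α (the immediate successor obtained by deleting the first letter and appending α) lies in Ā, and there exists a unique β ∈ ℤ/Nℤ such that the word βα₀…α_{l−2} (the immediate predecessor obtained by deleting the last letter and prepending β) lies in Ā. -/

import Mathlib

/-- The monoid homomorphism π sending a word α₁…α_l over ℤ/Nℤ to the matrix product
[[0,1],[−1,α₁]] ⋯ [[0,1],[−1,α_l]]. -/
def piWordN (N : ℕ) (w : List (ZMod N)) : Matrix (Fin 2) (Fin 2) (ZMod N) :=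
  (w.map fun α => !![0, 1; -1, α]).prod

/-- Ā : the words whose image under π has (2,2)-entry equal to 0. -/
def Abar (N : ℕ) : Set (List (ZMod N)) :=
  {w | piWordN N w 1 1 = 0}

lemma piWordN_append (N : ℕ) (u v : List (ZMod N)) :
    piWordN N (u ++ v) = piWordN N u * piWordN N v := by
  simp [piWordN]

lemma piWordN_cons (N : ℕ) (a : ZMod N) (t : List (ZMod N)) :
    piWordN N (a :: t) = !![0, 1; -1, a] * piWordN N t := by
  simp [piWordN]

lemma piWordN_singleton (N : ℕ) (a : ZMod N) :
    piWordN N [a] = !![0, 1; -1, a] := by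
  simp [piWordN]

lemma piWordN_det (N : ℕ) (w : List (ZMod N)) : (piWordN N w).det = 1 := by
  induction w with
  | nil => simp [piWordN]
  | cons a t ih =>
    rw [piWordN_cons, Matrix.det_mul, ih, mul_one]
    simp [Matrix.det_fin_two_of]

lemma entry_right {R : Type*} [CommRing R] (P : Matrix (Fin 2) (Fin 2) R) (α : R) :
    (P * !![0, 1; -1, α]) 1 1 = P 1 0 + P 1 1 * α := by
  simp [Matrix.mul_apply, Fin.sum_univ_two]

lemma entry_left {R : Type*} [CommRing R] (P : Matrix (Fin 2) (Fin 2) R) (α : R) :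
    (!![0, 1; -1, α] * P) 1 1 = -P 0 1 + P 1 1 * α := by
  simp [Matrix.mul_apply, Fin.sum_univ_two]
  try ring

lemma exists_unique_solve {R : Type*} [CommRing R] {u c : R} (hu : IsUnit u) :
    ∃! x : R, c + u * x = 0 := by
  obtain ⟨v, hv⟩ := hu
  refine ⟨↑v⁻¹ * (-c), ?_, ?_⟩
  · show c + u * (↑v⁻¹ * -c) = 0
    rw [← hv, Units.mul_inv_cancel_left]; ring
  · intro y hy
    have h1 : (v : R) * y = -c := by rw [hv]; linear_combination hy
    calc y = ↑v⁻¹ * ((v : R) * y) := by rw [Units.inv_mul_cancel_left]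
    _ = ↑v⁻¹ * (-c) := by rw [h1]

theorem stmt17 (N : ℕ) (hN : 0 < N) (w : List (ZMod N)) (hne : w ≠ [])
    (hw : w ∈ Abar N) :
    (∃! α : ZMod N, w.tail ++ [α] ∈ Abar N) ∧
    (∃! β : ZMod N, β :: w.dropLast ∈ Abar N) := by
  constructor
  · -- successor
    obtain ⟨a, t, rfl⟩ : ∃ a t, w = a :: t := by
      cases w with
      | nil => exact absurd rfl hne
      | cons a t => exact ⟨a, t, rfl⟩
    set P := piWordN N t with hP
    have hw' : -P 0 1 + P 1 1 * a = 0 := by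
      have h := hw
      rw [Abar, Set.mem_setOf_eq, piWordN_cons, entry_left] at h
      exact h
    have hdet : P 0 0 * P 1 1 - P 0 1 * P 1 0 = 1 := by
      have := piWordN_det N t
      rwa [Matrix.det_fin_two] at this
    have h01 : P 0 1 = P 1 1 * a := by linear_combination -hw'
    have hunit : IsUnit (P 1 1) := by
      refine IsUnit.of_mul_eq_one (P 0 0 - a * P 1 0) ?_
      linear_combination hdet + P 1 0 * h01
    have key : ∀ α : ZMod N, (a :: t).tail ++ [α] ∈ Abar N ↔ P 1 0 + P 1 1 * α = 0 := by
      intro α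
      rw [List.tail_cons, Abar, Set.mem_setOf_eq, piWordN_append, piWordN_singleton,
        entry_right]
    obtain ⟨x, hx, hx'⟩ := exists_unique_solve (c := P 1 0) hunit
    exact ⟨x, (key x).2 hx, fun y hy => hx' y ((key y).1 hy)⟩
  · -- predecessor
    obtain ⟨d, b, rfl⟩ : ∃ d b, w = d ++ [b] :=
      ⟨w.dropLast, w.getLast hne, (List.dropLast_append_getLast hne).symm⟩
    set Q := piWordN N d with hQ
    have hw' : Q 1 0 + Q 1 1 * b = 0 := by
      have h := hw
      rw [Abar, Set.mem_setOf_eq, piWordN_append, piWordN_singleton, entry_right] at h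
      exact h
    have hdet : Q 0 0 * Q 1 1 - Q 0 1 * Q 1 0 = 1 := by
      have := piWordN_det N d
      rwa [Matrix.det_fin_two] at this
    have hunit : IsUnit (Q 1 1) := by
      refine IsUnit.of_mul_eq_one (Q 0 0 + Q 0 1 * b) ?_
      linear_combination hdet + Q 0 1 * hw'
    have hdrop : (d ++ [b]).dropLast = d := by
      rw [List.dropLast_concat]
    have key : ∀ β : ZMod N, β :: (d ++ [b]).dropLast ∈ Abar N ↔ -Q 0 1 + Q 1 1 * β = 0 := by
      intro β
      rw [hdrop, Abar, Set.mem_setOf_eq, piWordN_cons, entry_left]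
    obtain ⟨x, hx, hx'⟩ := exists_unique_solve (c := -Q 0 1) hunit
    exact ⟨x, (key x).2 hx, fun y hy => hx' y ((key y).1 hy)⟩
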